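/- Let T : M_{d₁}(ℂ) → M_{d₂}(ℂ) be a quantum channel, let σ, ρ be positive definite states on M_{d₁}(ℂ) such that σ_T := T(σ) and ρ_T := T(ρ) are positive definite, and let V : ℂ^{d₁} → ℂ^{d₂} ⊗ ℂ^{s} be an isometry providing a Stinespring dilation of T, i.e. T(ω) = tr₂[V ω V*] for all ω ∈ M_{d₁}(ℂ), where tr₂ denotes the partial trace over the factor ℂ^{s}. If V σ^{1/2} V* (σ_T^{−1/2} Γ_T^{1/2} σ_T^{1/2} ⊗ I_s) = V Γ^{1/2} σ^{1/2} V*, then σ^{−1} ρ = T*(σ_T^{−1} ρ_T). -/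

import Mathlib

open Matrix MeasureTheory Filter Topology Kronecker ComplexOrder

/-- Apply a real function to a matrix via the functional calculus for Hermitian
matrices (and return `0` on non-Hermitian input). -/
noncomputable def mfun {d : ℕ} (f : ℝ → ℝ) (A : Matrix (Fin d) (Fin d) ℂ) :
    Matrix (Fin d) (Fin d) ℂ :=
  if hA : A.IsHermitian then hA.cfc f else 0

/-- Square root of a Hermitian positive semidefinite matrix. -/
noncomputable def msqrt {d : ℕ} (A : Matrix (Fin d) (Fin d) ℂ) : Matrix (Fin d) (Fin d) ℂ :=
  mfun Real.sqrt A

/-- Inverse square root of a Hermitian positive semidefinite matrix (Moore–Penrose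
pseudoinverse of the square root in the singular case, since `(0 : ℝ)⁻¹ = 0`). -/
noncomputable def misqrt {d : ℕ} (A : Matrix (Fin d) (Fin d) ℂ) : Matrix (Fin d) (Fin d) ℂ :=
  mfun (fun x => (Real.sqrt x)⁻¹) A

/-- Inverse of a Hermitian matrix (Moore–Penrose pseudoinverse in the singular case). -/
noncomputable def minv {d : ℕ} (A : Matrix (Fin d) (Fin d) ℂ) : Matrix (Fin d) (Fin d) ℂ :=
  mfun (fun x => x⁻¹) A

/-- Logarithm of a positive definite matrix. -/
noncomputable def mlog {d : ℕ} (A : Matrix (Fin d) (Fin d) ℂ) : Matrix (Fin d) (Fin d) ℂ :=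
  mfun Real.log A

/-- Frobenius (Schatten-2) norm ‖A‖₂ = tr(AᴴA)^(1/2). -/
noncomputable def frob {n : Type*} [Fintype n] (A : Matrix n n ℂ) : ℝ :=
  Real.sqrt (Matrix.trace (Aᴴ * A)).re

/-- Operator norm ‖A‖∞ of a matrix, acting on the Euclidean space ℂᵈ. -/
noncomputable def opNorm {n : Type*} [Fintype n] [DecidableEq n] (A : Matrix n n ℂ) : ℝ :=
  ‖LinearMap.toContinuousLinearMap (Matrix.toEuclideanLin A)‖

/-- The Belavkin–Staszewski relative entropy
`Ŝ_BS(σ‖ρ) = −tr[σ log(σ^{−1/2} ρ σ^{−1/2})]`. -/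
noncomputable def BS {d : ℕ} (σ ρ : Matrix (Fin d) (Fin d) ℂ) : ℝ :=
  -(Matrix.trace (σ * mlog (misqrt σ * ρ * misqrt σ))).re

/-- The maximal f-divergence `Ŝ_f(σ‖ρ) = tr[ρ^{1/2} f(ρ^{−1/2} σ ρ^{−1/2}) ρ^{1/2}]`. -/
noncomputable def hatS {d : ℕ} (f : ℝ → ℝ) (σ ρ : Matrix (Fin d) (Fin d) ℂ) : ℝ :=
  (Matrix.trace (msqrt ρ * mfun f (misqrt ρ * σ * misqrt ρ) * msqrt ρ)).re

/-- The Umegaki relative entropy `D(σ‖ρ) = tr[σ (log σ − log ρ)]`. -/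
noncomputable def relEnt {d : ℕ} (σ ρ : Matrix (Fin d) (Fin d) ℂ) : ℝ :=
  (Matrix.trace (σ * (mlog σ - mlog ρ))).re

/-- The Choi matrix of a linear map between matrix algebras. -/
noncomputable def choi {d₁ d₂ : ℕ} (T : Matrix (Fin d₁) (Fin d₁) ℂ →ₗ[ℂ] Matrix (Fin d₂) (Fin d₂) ℂ) :
    Matrix (Fin d₁ × Fin d₂) (Fin d₁ × Fin d₂) ℂ :=
  Matrix.of fun p q => T (Matrix.single p.1 q.1 1) p.2 q.2

/-- A quantum channel: a completely positive (equivalently, with positive semidefinite Choi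
matrix) trace-preserving linear map. -/
def IsCPTP {d₁ d₂ : ℕ} (T : Matrix (Fin d₁) (Fin d₁) ℂ →ₗ[ℂ] Matrix (Fin d₂) (Fin d₂) ℂ) :
    Prop :=
  (choi T).PosSemidef ∧ ∀ A, (T A).trace = A.trace

/-- Partial trace over the second tensor factor. -/
noncomputable def ptrace2 {d₂ s : ℕ} (M : Matrix (Fin d₂ × Fin s) (Fin d₂ × Fin s) ℂ) :
    Matrix (Fin d₂) (Fin d₂) ℂ :=
  Matrix.of fun i j => ∑ k : Fin s, M (i, k) (j, k)

/-- The Loewner order: `A ≤ B` iff `B - A` is positive semidefinite. -/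
def Loewner {n : ℕ} (A B : Matrix (Fin n) (Fin n) ℂ) : Prop := (B - A).PosSemidef

/-- A function `f : (0,∞) → ℝ` is operator convex. -/
def OperatorConvex (f : ℝ → ℝ) : Prop :=
  ∀ (n : ℕ) (A B : Matrix (Fin n) (Fin n) ℂ), A.PosDef → B.PosDef →
    ∀ t : ℝ, 0 ≤ t → t ≤ 1 →
      Loewner (mfun f ((t : ℂ) • A + ((1 - t : ℝ) : ℂ) • B))
        ((t : ℂ) • mfun f A + ((1 - t : ℝ) : ℂ) • mfun f B)

/-- A function `f : (0,∞) → ℝ` is operator monotone decreasing. -/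
def OperatorAntitone (f : ℝ → ℝ) : Prop :=
  ∀ (n : ℕ) (A B : Matrix (Fin n) (Fin n) ℂ), A.PosDef → B.PosDef →
    Loewner A B → Loewner (mfun f B) (mfun f A)


section myaux
open ComplexOrder Kronecker
variable {d : ℕ} {A : Matrix (Fin d) (Fin d) ℂ}

private lemma cfc_mul_cfc' (hA : A.IsHermitian) (f g : ℝ → ℝ) :
    hA.cfc f * hA.cfc g = hA.cfc (fun x => f x * g x) := by
  unfold Matrix.IsHermitian.cfc
  simp only [Unitary.conjStarAlgAut_apply]
  have h1 : (star (Matrix.IsHermitian.eigenvectorUnitary hA : Matrix (Fin d) (Fin d) ℂ)) *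
      (Matrix.IsHermitian.eigenvectorUnitary hA : Matrix (Fin d) (Fin d) ℂ) = 1 :=
    Unitary.coe_star_mul_self _
  rw [show ∀ (U D₁ D₂ W : Matrix (Fin d) (Fin d) ℂ), U * D₁ * W * (U * D₂ * W) =
    U * (D₁ * ((W * U) * D₂)) * W by intros; noncomm_ring, h1, one_mul,
    Matrix.diagonal_mul_diagonal]
  congr 1
  ext x
  simp [Function.comp]

private lemma cfc_congr_eigs' (hA : A.IsHermitian) {f g : ℝ → ℝ}
    (h : ∀ i, f (hA.eigenvalues i) = g (hA.eigenvalues i)) : hA.cfc f = hA.cfc g := by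
  unfold Matrix.IsHermitian.cfc
  congr 1
  ext i j
  simp [Matrix.diagonal_apply, h]

private lemma mcfc_id' (hA : A.IsHermitian) : hA.cfc (fun x => x) = A := by
  conv_rhs => rw [hA.spectral_theorem]
  rfl

private lemma mcfc_one' (hA : A.IsHermitian) : hA.cfc (fun _ => 1) = 1 := by
  unfold Matrix.IsHermitian.cfc
  have h2 : Matrix.diagonal (RCLike.ofReal ∘ (fun _ : ℝ => (1:ℝ)) ∘ hA.eigenvalues) =
      (1 : Matrix (Fin d) (Fin d) ℂ) := by
    rw [← Matrix.diagonal_one]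
    congr 1
  rw [h2, Unitary.conjStarAlgAut_apply, mul_one]
  exact Unitary.coe_mul_star_self _

private lemma cfc_isHermitian' (hA : A.IsHermitian) (f : ℝ → ℝ) : (hA.cfc f).IsHermitian := by
  unfold Matrix.IsHermitian.cfc
  unfold Matrix.IsHermitian
  rw [Unitary.conjStarAlgAut_apply, Matrix.conjTranspose_mul, Matrix.conjTranspose_mul, Matrix.diagonal_conjTranspose]
  simp only [star_eq_conjTranspose] at *
  rw [mul_assoc, Matrix.conjTranspose_conjTranspose]
  congr 2
  ext i j
  simp [Matrix.diagonal_apply]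

private lemma mfun_of_herm (hA : A.IsHermitian) (f : ℝ → ℝ) : mfun f A = hA.cfc f := dif_pos hA

private lemma msqrt_mul_msqrt (hA : A.PosSemidef) : msqrt A * msqrt A = A := by
  rw [msqrt, mfun_of_herm hA.1, cfc_mul_cfc',
    cfc_congr_eigs' hA.1 (g := fun x => x) (fun i => Real.mul_self_sqrt (hA.eigenvalues_nonneg i)),
    mcfc_id']

private lemma misqrt_mul_msqrt (hA : A.PosDef) : misqrt A * msqrt A = 1 := by
  rw [misqrt, msqrt, mfun_of_herm hA.1, mfun_of_herm hA.1, cfc_mul_cfc',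
    cfc_congr_eigs' hA.1 (g := fun _ => 1) (fun i => by
      have := hA.eigenvalues_pos i
      field_simp),
    mcfc_one']

private lemma msqrt_mul_misqrt (hA : A.PosDef) : msqrt A * misqrt A = 1 := by
  rw [misqrt, msqrt, mfun_of_herm hA.1, mfun_of_herm hA.1, cfc_mul_cfc',
    cfc_congr_eigs' hA.1 (g := fun _ => 1) (fun i => by
      have := hA.eigenvalues_pos i
      field_simp),
    mcfc_one']

private lemma misqrt_mul_misqrt (hA : A.PosDef) : misqrt A * misqrt A = minv A := by
  rw [misqrt, minv, mfun_of_herm hA.1, mfun_of_herm hA.1, cfc_mul_cfc']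
  refine cfc_congr_eigs' hA.1 (fun i => ?_)
  have := hA.eigenvalues_pos i
  rw [← mul_inv, Real.mul_self_sqrt this.le]

private lemma mfun_isHermitian (hA : A.IsHermitian) (f : ℝ → ℝ) : (mfun f A).IsHermitian := by
  rw [mfun_of_herm hA]; exact cfc_isHermitian' hA f

end myaux

section myaux3
open Kronecker
variable {n d₂ s : ℕ}

private lemma trace_zero_imp_zero (A : Matrix (Fin n) (Fin n) ℂ)
    (h : Matrix.trace (Aᴴ * A) = 0) : A = 0 := by
  have h2 : ∑ i, ∑ j, Complex.normSq (A j i) = 0 := by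
    have := congrArg Complex.re h
    simpa [Matrix.trace, Matrix.mul_apply, Complex.mul_re, Complex.normSq] using this
  ext i j
  simp only [Matrix.zero_apply]
  have hnn : ∀ p ∈ Finset.univ, (0:ℝ) ≤ ∑ q, Complex.normSq (A q p) :=
    fun p _ => Finset.sum_nonneg fun q _ => Complex.normSq_nonneg _
  have h3 := (Finset.sum_eq_zero_iff_of_nonneg hnn).mp h2 j (Finset.mem_univ j)
  have h4 := (Finset.sum_eq_zero_iff_of_nonneg
    (fun q _ => Complex.normSq_nonneg (A q j))).mp h3 i (Finset.mem_univ i)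
  simpa using Complex.normSq_eq_zero.mp h4

private lemma pairing (M : Matrix (Fin d₂ × Fin s) (Fin d₂ × Fin s) ℂ)
    (Z : Matrix (Fin d₂) (Fin d₂) ℂ) :
    Matrix.trace (Mᴴ * (Z ⊗ₖ (1 : Matrix (Fin s) (Fin s) ℂ))) =
      Matrix.trace ((ptrace2 M)ᴴ * Z) := by
  simp only [Matrix.trace, Matrix.diag, Matrix.mul_apply, Matrix.conjTranspose_apply,
    ptrace2, Matrix.of_apply, Matrix.kroneckerMap_apply, Matrix.one_apply,
    Fintype.sum_prod_type, star_sum, Finset.sum_mul, mul_ite, mul_one, mul_zero,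
    Finset.sum_ite_eq', Finset.mem_univ, if_true]
  refine Finset.sum_congr rfl fun x _ => ?_
  rw [Finset.sum_comm]

private lemma main_alg {d₁ d₂ s : ℕ} (V : Matrix (Fin d₂ × Fin s) (Fin d₁) ℂ)
    (S iS G P NS : Matrix (Fin d₁) (Fin d₁) ℂ)
    (sT iT GT PT NT X : Matrix (Fin d₂) (Fin d₂) ℂ)
    (hV : Vᴴ * V = 1)
    (hX : X = iT * GT * sT)
    (hSS : iS * S = 1)
    (hGG : G * G = iS * P * iS)
    (hGTGT : GT * GT = iT * PT * iT)
    (hTsi : sT * iT = 1)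
    (hTis : iT * sT = 1)
    (hNS : iS * iS = NS)
    (hNT : iT * iT = NT)
    (hcond : V * S * Vᴴ * (X ⊗ₖ (1 : Matrix (Fin s) (Fin s) ℂ)) = V * G * S * Vᴴ) :
    Vᴴ * ((NT * PT) ⊗ₖ (1 : Matrix (Fin s) (Fin s) ℂ)) * V = NS * P := by
  have hVl : ∀ {m : ℕ} (M : Matrix (Fin d₁) (Fin m) ℂ), Vᴴ * (V * M) = M := by
    intro m M; rw [← Matrix.mul_assoc, hV, Matrix.one_mul]
  have hXX : X * X = NT * PT := by
    rw [hX]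
    calc iT * GT * sT * (iT * GT * sT)
        = iT * (GT * ((sT * iT) * (GT * sT))) := by noncomm_ring
      _ = iT * ((GT * GT) * sT) := by rw [hTsi, one_mul, Matrix.mul_assoc]
      _ = iT * ((iT * PT * iT) * sT) := by rw [hGTGT]
      _ = (iT * iT) * PT * (iT * sT) := by noncomm_ring
      _ = NT * PT := by rw [hNT, hTis, mul_one]
  have eq1 : S * (Vᴴ * ((X ⊗ₖ (1 : Matrix (Fin s) (Fin s) ℂ)) * V)) = G * S := by
    have h := congrArg (fun M => Vᴴ * (M * V)) hcond
    simp only [Matrix.mul_assoc] at h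
    rw [hVl, hVl, hV, mul_one] at h
    exact h
  have eq2 : S * (Vᴴ * (((X * X) ⊗ₖ (1 : Matrix (Fin s) (Fin s) ℂ)) * V)) = G * (G * S) := by
    have h := congrArg
      (fun M => Vᴴ * (M * ((X ⊗ₖ (1 : Matrix (Fin s) (Fin s) ℂ)) * V))) hcond
    simp only [Matrix.mul_assoc] at h
    rw [hVl, hVl, eq1] at h
    rw [show (X ⊗ₖ (1 : Matrix (Fin s) (Fin s) ℂ)) *
        ((X ⊗ₖ (1 : Matrix (Fin s) (Fin s) ℂ)) * V) =
        ((X * X) ⊗ₖ (1 : Matrix (Fin s) (Fin s) ℂ)) * V by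
      rw [← Matrix.mul_assoc, ← Matrix.mul_kronecker_mul, one_mul]] at h
    exact h
  have eq3 : Vᴴ * (((X * X) ⊗ₖ (1 : Matrix (Fin s) (Fin s) ℂ)) * V) = iS * (G * (G * S)) := by
    have h := congrArg (fun M => iS * M) eq2
    rw [← Matrix.mul_assoc iS S _, hSS, Matrix.one_mul] at h
    exact h
  calc Vᴴ * ((NT * PT) ⊗ₖ (1 : Matrix (Fin s) (Fin s) ℂ)) * V
      = Vᴴ * (((X * X) ⊗ₖ (1 : Matrix (Fin s) (Fin s) ℂ)) * V) := by
        rw [hXX, Matrix.mul_assoc]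
    _ = iS * (G * (G * S)) := eq3
    _ = iS * ((G * G) * S) := by rw [mul_assoc]
    _ = iS * ((iS * P * iS) * S) := by rw [hGG]
    _ = (iS * iS) * P * (iS * S) := by noncomm_ring
    _ = NS * P := by rw [hNS, hSS, mul_one]

end myaux3

theorem stmt4 {s : ℕ} {d₁ d₂ : ℕ}
    (T : Matrix (Fin d₁) (Fin d₁) ℂ →ₗ[ℂ] Matrix (Fin d₂) (Fin d₂) ℂ)
    (hT : IsCPTP T)
    (Tadj : Matrix (Fin d₂) (Fin d₂) ℂ → Matrix (Fin d₁) (Fin d₁) ℂ)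
    (hTadj : ∀ (X : Matrix (Fin d₂) (Fin d₂) ℂ) (Y : Matrix (Fin d₁) (Fin d₁) ℂ),
      Matrix.trace ((T Y)ᴴ * X) = Matrix.trace (Yᴴ * Tadj X))
    (σ ρ : Matrix (Fin d₁) (Fin d₁) ℂ)
    (hσ : σ.PosDef) (hσtr : σ.trace = 1)
    (hρ : ρ.PosDef) (hρtr : ρ.trace = 1)
    (hσT : (T σ).PosDef) (hρT : (T ρ).PosDef)
    (V : Matrix (Fin d₂ × Fin s) (Fin d₁) ℂ)
    (hV : Vᴴ * V = 1)
    (hSt : ∀ ω : Matrix (Fin d₁) (Fin d₁) ℂ, T ω = ptrace2 (V * ω * Vᴴ))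
    (hcond : V * msqrt σ * Vᴴ *
        ((misqrt (T σ) * msqrt (misqrt (T σ) * T ρ * misqrt (T σ)) * msqrt (T σ)) ⊗ₖ
          (1 : Matrix (Fin s) (Fin s) ℂ)) =
      V * msqrt (misqrt σ * ρ * misqrt σ) * msqrt σ * Vᴴ) :
    minv σ * ρ = Tadj (minv (T σ) * T ρ) := by
  classical
  have hiSh : (misqrt σ).IsHermitian := mfun_isHermitian hσ.1 _
  have hiTh : (misqrt (T σ)).IsHermitian := mfun_isHermitian hσT.1 _
  have hGamma : (misqrt σ * ρ * misqrt σ).PosSemidef := by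
    have h := hρ.posSemidef.conjTranspose_mul_mul_same (misqrt σ)
    rwa [hiSh.eq] at h
  have hGammaT : (misqrt (T σ) * T ρ * misqrt (T σ)).PosSemidef := by
    have h := hρT.posSemidef.conjTranspose_mul_mul_same (misqrt (T σ))
    rwa [hiTh.eq] at h
  have hTadj2 : ∀ Z : Matrix (Fin d₂) (Fin d₂) ℂ,
      Tadj Z = Vᴴ * (Z ⊗ₖ (1 : Matrix (Fin s) (Fin s) ℂ)) * V := by
    intro Z
    have key : ∀ Y : Matrix (Fin d₁) (Fin d₁) ℂ,
        Matrix.trace (Yᴴ * Tadj Z) =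
          Matrix.trace (Yᴴ * (Vᴴ * (Z ⊗ₖ (1 : Matrix (Fin s) (Fin s) ℂ)) * V)) := by
      intro Y
      rw [← hTadj Z Y, hSt, ← pairing]
      rw [Matrix.conjTranspose_mul, Matrix.conjTranspose_mul,
        Matrix.conjTranspose_conjTranspose]
      rw [show V * (Yᴴ * Vᴴ) * (Z ⊗ₖ (1 : Matrix (Fin s) (Fin s) ℂ)) =
          V * (Yᴴ * (Vᴴ * (Z ⊗ₖ (1 : Matrix (Fin s) (Fin s) ℂ)))) by
            simp only [Matrix.mul_assoc],
        show Yᴴ * (Vᴴ * (Z ⊗ₖ (1 : Matrix (Fin s) (Fin s) ℂ)) * V) =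
          Yᴴ * (Vᴴ * (Z ⊗ₖ (1 : Matrix (Fin s) (Fin s) ℂ))) * V by
            simp only [Matrix.mul_assoc],
        Matrix.trace_mul_comm V (Yᴴ * (Vᴴ * (Z ⊗ₖ (1 : Matrix (Fin s) (Fin s) ℂ))))]
    have h0 : Matrix.trace
        ((Tadj Z - Vᴴ * (Z ⊗ₖ (1 : Matrix (Fin s) (Fin s) ℂ)) * V)ᴴ *
          (Tadj Z - Vᴴ * (Z ⊗ₖ (1 : Matrix (Fin s) (Fin s) ℂ)) * V)) = 0 := by
      rw [mul_sub, Matrix.trace_sub, key, sub_self]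
    have hz := trace_zero_imp_zero _ h0
    rw [sub_eq_zero] at hz
    exact hz
  rw [hTadj2 (minv (T σ) * T ρ)]
  refine (main_alg V (msqrt σ) (misqrt σ) (msqrt (misqrt σ * ρ * misqrt σ)) ρ (minv σ)
    (msqrt (T σ)) (misqrt (T σ)) (msqrt (misqrt (T σ) * T ρ * misqrt (T σ))) (T ρ)
    (minv (T σ)) _ hV rfl (misqrt_mul_msqrt hσ) (msqrt_mul_msqrt hGamma)
    (msqrt_mul_msqrt hGammaT) (msqrt_mul_misqrt hσT) (misqrt_mul_msqrt hσT)
    (misqrt_mul_misqrt hσ) (misqrt_mul_misqrt hσT) hcond).symm
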